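/- Sufficient synchronization is an invariant of topological conjugacy: if X and X̃ are topologically conjugate subshifts and X is sufficiently synchronizing, then X̃ is sufficiently synchronizing. -/

import Mathlib

/-- The shift on `Σ^ℤ`: `(x_i)_{i∈ℤ} ↦ (x_{i+1})_{i∈ℤ}`. -/
def shift {A : Type*} (x : ℤ → A) : ℤ → A := fun i => x (i + 1)

/-- The word `x_{[a,b]}` carried by the block of `x` on the interval `[a, b]`. -/
def block {A : Type*} (x : ℤ → A) (a b : ℤ) : List A :=
  (List.range (b + 1 - a).toNat).map fun k => x (a + k)

/-- A word is admissible for `X` if it appears in a point of `X`. -/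
def Admissible {A : Type*} (X : Set (ℤ → A)) (w : List A) : Prop :=
  ∃ x ∈ X, ∃ n : ℤ, ∀ (k : ℕ) (h : k < w.length), x (n + k) = w.get ⟨k, h⟩

/-- A word `v` is synchronizing for `X` if it is admissible and whenever `uv` and `vw`
are admissible, so is `uvw`. -/
def IsSyncWord {A : Type*} (X : Set (ℤ → A)) (v : List A) : Prop :=
  Admissible X v ∧ ∀ u w : List A, Admissible X (u ++ v) → Admissible X (v ++ w) →
    Admissible X (u ++ v ++ w)

/-- A subshift: a nonempty, closed, shift-invariant subset of `Σ^ℤ`. -/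
def IsSubshift {A : Type*} [TopologicalSpace A] (X : Set (ℤ → A)) : Prop :=
  X.Nonempty ∧ IsClosed X ∧ shift '' X = X

/-- Topological transitivity of a subshift, expressed on its language: any two admissible
words can be joined by an admissible transition word. -/
def LangTransitive {A : Type*} (X : Set (ℤ → A)) : Prop :=
  ∀ u v : List A, Admissible X u → Admissible X v → ∃ w, Admissible X (u ++ w ++ v)

/-- A synchronizing subshift: topologically transitive with a synchronizing word. -/
def SyncSubshift {A : Type*} (X : Set (ℤ → A)) : Prop :=
  LangTransitive X ∧ ∃ v : List A, IsSyncWord X v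

/-- A strongly synchronizing subshift: synchronizing symbols appear uniformly close
(within distance `Q`) to synchronizing words. -/
def StronglySync {A : Type*} (X : Set (ℤ → A)) : Prop :=
  SyncSubshift X ∧ ∃ Q : ℕ, ∀ x ∈ X, ∀ I₁ I₂ : ℤ, I₁ ≤ I₂ →
    IsSyncWord X (block x I₁ I₂) →
    ∃ i : ℤ, I₁ - Q ≤ i ∧ i ≤ I₂ + Q ∧ IsSyncWord X [x i]

/-- The higher block system `X^{⟨[a,b]⟩}` of `X`, over the alphabet of words. -/
def higherBlock {A : Type*} (X : Set (ℤ → A)) (a b : ℤ) : Set (ℤ → List A) :=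
  { y | ∃ x ∈ X, ∀ i : ℤ, y i = block x (i + a) (i + b) }

/-- A sufficiently synchronizing subshift: one having a strongly synchronizing
higher block system. -/
def SufficientlySync {A : Type*} (X : Set (ℤ → A)) : Prop :=
  ∃ a b : ℤ, a ≤ b ∧ StronglySync (higherBlock X a b)

namespace Stmt1Aux

def shiftBy {A : Type*} (m : ℤ) (x : ℤ → A) : ℤ → A := fun i => x (i + m)

theorem shiftBy_zero {A : Type*} (x : ℤ → A) : shiftBy 0 x = x :=
  funext fun i => congrArg x (add_zero i)

theorem shiftBy_add {A : Type*} (m n : ℤ) (x : ℤ → A) :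
    shiftBy m (shiftBy n x) = shiftBy (m + n) x :=
  funext fun i => congrArg x (by ring)

theorem shift_eq_shiftBy {A : Type*} (x : ℤ → A) : shift x = shiftBy 1 x := rfl

theorem getf {A : Type*} {l : List A} {k : ℕ} {h : k < l.length} : l.get ⟨k, h⟩ = l[k] := rfl

theorem block_def {A : Type*} (x : ℤ → A) (a b : ℤ) :
    block x a b = (List.range (b + 1 - a).toNat).map (fun k : ℕ => x (a + (k : ℤ))) := by
  rw [block]
  show List.map _ (List.flatMap _ _) = _
  rw [show (fun a : ℕ => (pure (↑a : ℤ) : List ℤ)) = (fun a : ℕ => [(↑a : ℤ)]) from rfl,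
    ← List.map_eq_flatMap, List.map_map]
  rfl

theorem blk_length {A : Type*} (x : ℤ → A) (a b : ℤ) :
    (block x a b).length = (b + 1 - a).toNat := by
  rw [block_def, List.length_map, List.length_range]

theorem blk_getElem {A : Type*} (x : ℤ → A) (a b : ℤ) (k : ℕ)
    (h : k < (block x a b).length) : (block x a b)[k] = x (a + k) := by
  have h' : k < (b + 1 - a).toNat := by rwa [blk_length] at h
  simp only [block_def, List.getElem_map, List.getElem_range]

theorem blk_get {A : Type*} (x : ℤ → A) (a b : ℤ) (k : ℕ) (h : k < (block x a b).length) :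
    (block x a b).get ⟨k, h⟩ = x (a + k) := by rw [getf, blk_getElem]

theorem blk_eq_of_forall {A : Type*} {x y : ℤ → A} {a b : ℤ}
    (h : ∀ j, a ≤ j → j ≤ b → x j = y j) : block x a b = block y a b := by
  apply List.ext_get (by rw [blk_length, blk_length])
  intro n h1 h2
  rw [blk_get, blk_get]
  have hb : (n : ℤ) < b + 1 - a := by
    have := h1; rw [blk_length] at this; omega
  exact h _ (by omega) (by omega)

theorem blk_pt {A : Type*} {x y : ℤ → A} {a b j : ℤ}
    (h : block x a b = block y a b) (h1 : a ≤ j) (h2 : j ≤ b) : x j = y j := by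
  set k := (j - a).toNat with hk
  have hkx : k < (block x a b).length := by rw [blk_length]; omega
  have hky : k < (block y a b).length := by rw [blk_length]; omega
  have ex : (block x a b)[k]? = some (x (a + k)) := by
    rw [List.getElem?_eq_getElem hkx, blk_getElem]
  have ey : (block y a b)[k]? = some (y (a + k)) := by
    rw [List.getElem?_eq_getElem hky, blk_getElem]
  rw [h, ey] at ex
  have e2 : y (a + (k : ℤ)) = x (a + (k : ℤ)) := by injection ex
  have hj : a + (k : ℤ) = j := by omega
  rw [hj] at e2; exact e2.symm

theorem blk_of_match {A : Type*} {x : ℤ → A} {w : List A} {n : ℤ}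
    (h : ∀ (k : ℕ) (hk : k < w.length), x (n + k) = w.get ⟨k, hk⟩) :
    block x n (n + w.length - 1) = w := by
  apply List.ext_get (by rw [blk_length]; omega)
  intro m h1 h2
  rw [blk_get]; exact h m h2

theorem adm_blk {A : Type*} {X : Set (ℤ → A)} {x : ℤ → A} (hx : x ∈ X) (a b : ℤ) :
    Admissible X (block x a b) :=
  ⟨x, hx, a, fun k h => (blk_get x a b k h).symm⟩

theorem adm_of_blk_eq {A : Type*} {X : Set (ℤ → A)} {x : ℤ → A} (hx : x ∈ X) {a b : ℤ}
    {w : List A} (h : block x a b = w) : Admissible X w := h ▸ adm_blk hx a b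

theorem shiftBy_mem {A : Type*} {X : Set (ℤ → A)} (hX : shift '' X = X) {x : ℤ → A}
    (hx : x ∈ X) (m : ℤ) : shiftBy m x ∈ X := by
  have fwd : ∀ y ∈ X, shiftBy 1 y ∈ X := by
    intro y hy
    have : shift y ∈ X := by rw [← hX]; exact ⟨y, hy, rfl⟩
    exact this
  have bwd : ∀ y ∈ X, shiftBy (-1) y ∈ X := by
    intro y hy
    have hy' : y ∈ shift '' X := by rw [hX]; exact hy
    obtain ⟨y', hy', he⟩ := hy'
    have : shiftBy (-1) y = y' := by
      funext i; rw [← he]; exact congrArg y' (by ring)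
    rw [this]; exact hy'
  induction m using Int.induction_on with
  | zero => rwa [shiftBy_zero]
  | succ k ih =>
      have := fwd _ ih
      rwa [shiftBy_add, add_comm] at this
  | pred k ih =>
      have := bwd _ ih
      rwa [shiftBy_add, show (-1 : ℤ) + -(k:ℤ) = -(k:ℤ) - 1 by ring] at this

theorem blk_shift {A : Type*} (x : ℤ → A) (m a b : ℤ) :
    block (shiftBy m x) a b = block x (a + m) (b + m) := by
  apply List.ext_get (by rw [blk_length, blk_length]; omega)
  intro n h1 h2
  rw [blk_get, blk_get]
  exact congrArg x (by ring)

theorem occ {A : Type*} {X : Set (ℤ → A)} (hX : shift '' X = X) {w : List A}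
    (hw : Admissible X w) (n : ℤ) :
    ∃ x ∈ X, block x n (n + w.length - 1) = w := by
  obtain ⟨x, hx, m, hm⟩ := hw
  refine ⟨shiftBy (m - n) x, shiftBy_mem hX hx _, ?_⟩
  rw [blk_shift, show n + (m - n) = m by ring,
    show n + (w.length : ℤ) - 1 + (m - n) = m + w.length - 1 by ring]
  exact blk_of_match hm

theorem blk_app {A : Type*} (x : ℤ → A) {a b c : ℤ} (h1 : a - 1 ≤ b) (h2 : b ≤ c) :
    block x a c = block x a b ++ block x (b + 1) c := by
  apply List.ext_get (by simp only [blk_length, List.length_append]; omega)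
  intro n hn hn'
  rw [blk_get, getf]
  by_cases hc : n < (block x a b).length
  · rw [List.getElem_append_left hc, blk_getElem]
  · push_neg at hc
    rw [List.getElem_append_right hc, blk_getElem]
    have hl : (block x a b).length = (b + 1 - a).toNat := blk_length x a b
    exact congrArg x (by omega)

theorem blk_split {A : Type*} {x : ℤ → A} {a b c : ℤ} {s t : List A} (h1 : a - 1 ≤ b)
    (h2 : b ≤ c) (h : block x a c = s ++ t) (hs : s.length = (b + 1 - a).toNat) :
    block x a b = s ∧ block x (b + 1) c = t := by
  have e := blk_app x h1 h2
  rw [h] at e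
  exact List.append_inj e.symm (by rw [hs, blk_length])

theorem adm_prefix {A : Type*} {X : Set (ℤ → A)} {s t : List A}
    (h : Admissible X (s ++ t)) : Admissible X s := by
  obtain ⟨x, hx, n, hm⟩ := h
  refine ⟨x, hx, n, fun k hk => ?_⟩
  have hk' : k < (s ++ t).length := by simp only [List.length_append]; omega
  have := hm k hk'
  rwa [getf, List.getElem_append_left hk, ← getf] at this

theorem adm_suffix {A : Type*} {X : Set (ℤ → A)} {s t : List A}
    (h : Admissible X (s ++ t)) : Admissible X t := by
  obtain ⟨x, hx, n, hm⟩ := h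
  refine ⟨x, hx, n + s.length, fun k hk => ?_⟩
  have hk' : s.length + k < (s ++ t).length := by simp only [List.length_append]; omega
  have := hm (s.length + k) hk'
  rw [getf, List.getElem_append_right (by omega)] at this
  simp only [Nat.add_sub_cancel_left] at this
  rw [getf, ← this]
  exact congrArg x (by push_cast; ring)

end Stmt1Aux
namespace Stmt1Aux

theorem adm_congr {A : Type*} {X : Set (ℤ → A)} {w w' : List A} (h : w = w')
    (hw : Admissible X w) : Admissible X w' := h ▸ hw

theorem sync_extend {A : Type*} {X : Set (ℤ → A)} {x : ℤ → A} (hx : x ∈ X)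
    {J₁ J₂ J₁' J₂' : ℤ} (h1 : J₁' ≤ J₁) (h2 : J₁ - 1 ≤ J₂) (h3 : J₂ ≤ J₂')
    (hv : IsSyncWord X (block x J₁ J₂)) : IsSyncWord X (block x J₁' J₂') := by
  obtain ⟨-, hsync⟩ := hv
  set p := block x J₁' (J₁ - 1) with hp
  set v := block x J₁ J₂ with hvv
  set q := block x (J₂ + 1) J₂' with hq
  have e : block x J₁' J₂' = p ++ (v ++ q) := by
    rw [hp, hvv, hq, blk_app x (show J₁' - 1 ≤ J₁ - 1 by omega) (show J₁ - 1 ≤ J₂' by omega)]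
    congr 1
    rw [show J₁ - 1 + 1 = J₁ by ring]
    exact blk_app x (by omega) h3
  refine ⟨adm_blk hx _ _, ?_⟩
  intro u w hu hw
  rw [e] at hu hw
  have hu' : Admissible X ((u ++ p) ++ v) := by
    apply adm_prefix (t := q)
    apply adm_congr _ hu
    simp [List.append_assoc]
  have hw' : Admissible X (v ++ (q ++ w)) := by
    apply adm_suffix (s := p)
    apply adm_congr _ hw
    simp [List.append_assoc]
  have := hsync (u ++ p) (q ++ w) hu' hw'
  rw [e]
  apply adm_congr _ this
  simp [List.append_assoc]

theorem blk_singleton {A : Type*} (x : ℤ → A) (i : ℤ) : block x i i = [x i] := by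
  have h1 : (block x i i).length = 1 := by rw [blk_length]; omega
  apply List.ext_get (by rw [h1]; rfl)
  intro n hn hn'
  rw [blk_get]
  rw [h1] at hn
  interval_cases n
  · simp

theorem cover {p q R i : ℤ} (hpq : p ≤ q) (hR : 0 ≤ R) (h1 : p - R ≤ i) (h2 : i ≤ q + R) :
    ∃ j, p ≤ j ∧ j ≤ q ∧ j - R ≤ i ∧ i ≤ j + R := ⟨max p (min i q), by omega⟩

/-- the higher block map -/
def hbw {A : Type*} (a b : ℤ) (x : ℤ → A) : ℤ → List A := fun i => block x (i + a) (i + b)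

theorem hbw_mem {A : Type*} {X : Set (ℤ → A)} {x : ℤ → A} (hx : x ∈ X) (a b : ℤ) :
    hbw a b x ∈ higherBlock X a b := ⟨x, hx, fun _ => rfl⟩

theorem hbw_elim {A : Type*} {X : Set (ℤ → A)} {y : ℤ → List A} (a b : ℤ)
    (hy : y ∈ higherBlock X a b) : ∃ x ∈ X, y = hbw a b x := by
  obtain ⟨x, hx, he⟩ := hy
  exact ⟨x, hx, funext he⟩

theorem hbw_shiftBy {A : Type*} (a b m : ℤ) (x : ℤ → A) :
    hbw a b (shiftBy m x) = shiftBy m (hbw a b x) := by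
  funext i
  show block (shiftBy m x) (i + a) (i + b) = block x (i + m + a) (i + m + b)
  rw [blk_shift]
  congr 1 <;> ring

theorem hbw_shift {A : Type*} (a b : ℤ) (x : ℤ → A) :
    hbw a b (shift x) = shift (hbw a b x) := by
  rw [shift_eq_shiftBy, shift_eq_shiftBy, hbw_shiftBy]

theorem hb_shift_inv {A : Type*} {X : Set (ℤ → A)} (hX : shift '' X = X) (a b : ℤ) :
    shift '' higherBlock X a b = higherBlock X a b := by
  ext y
  constructor
  · rintro ⟨z, hz, rfl⟩
    obtain ⟨x, hx, rfl⟩ := hbw_elim a b hz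
    rw [← hbw_shift]
    exact hbw_mem (by rw [← hX]; exact ⟨x, hx, rfl⟩) a b
  · intro hy
    obtain ⟨x, hx, rfl⟩ := hbw_elim a b hy
    have hx' : shiftBy (-1) x ∈ X := shiftBy_mem hX hx (-1)
    refine ⟨hbw a b (shiftBy (-1) x), hbw_mem hx' a b, ?_⟩
    rw [hbw_shiftBy, shift_eq_shiftBy, shiftBy_add, show (1:ℤ) + -1 = 0 by norm_num, shiftBy_zero]

theorem hbw_congr_at {A : Type*} {x y : ℤ → A} {a b : ℤ} {i : ℤ}
    (h : ∀ j, i + a ≤ j → j ≤ i + b → x j = y j) : hbw a b x i = hbw a b y i :=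
  blk_eq_of_forall h

end Stmt1Aux
namespace Stmt1Aux

theorem blk_len_int {A : Type*} (x : ℤ → A) {a b : ℤ} (h : a ≤ b + 1) :
    ((block x a b).length : ℤ) = b + 1 - a := by rw [blk_length]; omega

theorem blk_cut {A : Type*} (x : ℤ → A) {a m c : ℤ} (h1 : a ≤ m) (h2 : m ≤ c + 1) :
    block x a c = block x a (m - 1) ++ block x m c := by
  have := blk_app x (a := a) (b := m - 1) (c := c) (by omega) (by omega)
  rwa [show m - 1 + 1 = m by ring] at this

theorem blk_cut_split {A : Type*} {x : ℤ → A} {a m c : ℤ} {s t : List A} (h1 : a ≤ m)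
    (h2 : m ≤ c + 1) (h : block x a c = s ++ t) (hs : (s.length : ℤ) = m - a) :
    block x a (m - 1) = s ∧ block x m c = t := by
  have e := blk_cut x h1 h2
  rw [h] at e
  exact List.append_inj e.symm (by rw [blk_length]; omega)

theorem sync_push {C B : Type*} {Y : Set (ℤ → C)} {Z : Set (ℤ → B)}
    (hYs : shift '' Y = Y) (hZs : shift '' Z = Z)
    {Φ : (ℤ → C) → (ℤ → B)} {Ψ : (ℤ → B) → (ℤ → C)}
    (hΦ : ∀ η ∈ Y, Φ η ∈ Z) (hΨ : ∀ ζ ∈ Z, Ψ ζ ∈ Y)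
    (hΨΦ : ∀ η ∈ Y, Ψ (Φ η) = η) (hΦΨ : ∀ ζ ∈ Z, Φ (Ψ ζ) = ζ)
    (M : ℕ)
    (hΦb : ∀ η ∈ Y, ∀ η' ∈ Y, ∀ i : ℤ,
      (∀ j, i - M ≤ j → j ≤ i + M → η j = η' j) → Φ η i = Φ η' i)
    (hΨb : ∀ ζ ∈ Z, ∀ ζ' ∈ Z, ∀ i : ℤ,
      (∀ j, i - M ≤ j → j ≤ i + M → ζ j = ζ' j) → Ψ ζ i = Ψ ζ' i)
    {η : ℤ → C} (hη : η ∈ Y) {J₁ J₂ : ℤ} (hlen : J₁ + M ≤ J₂ - M + 1)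
    (hv : IsSyncWord Y (block η J₁ J₂)) :
    IsSyncWord Z (block (Φ η) (J₁ - M) (J₂ + M)) := by
  have hJ : J₁ - 1 ≤ J₂ := by omega
  obtain ⟨-, hsync⟩ := hv
  have hζη : Φ η ∈ Z := hΦ η hη
  refine ⟨adm_blk hζη _ _, ?_⟩
  intro u u' hu hu'
  have hwlen : ((block (Φ η) (J₁ - M) (J₂ + M)).length : ℤ) = J₂ + M + 1 - (J₁ - M) :=
    blk_len_int _ (by omega)
  -- occurrence of u ++ w
  obtain ⟨ζ₁, hζ₁, he₁⟩ := occ hZs hu (J₁ - M - u.length)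
  rw [show J₁ - M - u.length + ((u ++ block (Φ η) (J₁ - M) (J₂ + M)).length : ℤ) - 1
      = J₂ + M by rw [List.length_append, Nat.cast_add, hwlen]; ring] at he₁
  obtain ⟨he₁u, he₁w⟩ := blk_cut_split (m := J₁ - M) (by omega) (by omega) he₁ (by push_cast; ring)
  -- occurrence of w ++ u'
  obtain ⟨ζ₂, hζ₂, he₂⟩ := occ hZs hu' (J₁ - M)
  rw [show J₁ - M + ((block (Φ η) (J₁ - M) (J₂ + M) ++ u').length : ℤ) - 1
      = J₂ + M + u'.length by rw [List.length_append, Nat.cast_add, hwlen]; ring] at he₂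
  obtain ⟨he₂w, he₂u⟩ := blk_cut_split (m := J₂ + M + 1) (by omega) (by omega) he₂
    (by rw [hwlen])
  rw [show J₂ + M + 1 - 1 = J₂ + M by ring] at he₂w
  -- pull back to Y
  have hη₁ : Ψ ζ₁ ∈ Y := hΨ ζ₁ hζ₁
  have hη₂ : Ψ ζ₂ ∈ Y := hΨ ζ₂ hζ₂
  have key : ∀ ζ ∈ Z, block ζ (J₁ - M) (J₂ + M) = block (Φ η) (J₁ - M) (J₂ + M) →
      ∀ j, J₁ ≤ j → j ≤ J₂ → Ψ ζ j = η j := by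
    intro ζ hζ he j hj1 hj2
    have := hΨb ζ hζ (Φ η) hζη j (fun i hi1 hi2 => blk_pt he (by omega) (by omega))
    rwa [hΨΦ η hη] at this
  have hb₁ : block (Ψ ζ₁) J₁ J₂ = block η J₁ J₂ := blk_eq_of_forall (key ζ₁ hζ₁ he₁w)
  have hb₂ : block (Ψ ζ₂) J₁ J₂ = block η J₁ J₂ := blk_eq_of_forall (key ζ₂ hζ₂ he₂w)
  -- glue in Y
  have huY : Admissible Y (block (Ψ ζ₁) (J₁ - u.length - 2 * M) (J₁ - 1) ++ block η J₁ J₂) := by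
    refine adm_of_blk_eq hη₁ (a := J₁ - u.length - 2 * M) (b := J₂) ?_
    rw [blk_cut (m := J₁) _ (by omega) (by omega), hb₁]
  have hwY : Admissible Y (block η J₁ J₂ ++ block (Ψ ζ₂) (J₂ + 1) (J₂ + u'.length + 2 * M)) := by
    refine adm_of_blk_eq hη₂ (a := J₁) (b := J₂ + u'.length + 2 * M) ?_
    rw [blk_cut (m := J₂ + 1) _ (by omega) (by omega), show J₂ + 1 - 1 = J₂ by ring, hb₂]
  have hglue := hsync _ _ huY hwY
  obtain ⟨η₃, hη₃, he₃⟩ := occ hYs hglue (J₁ - u.length - 2 * M)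
  rw [show J₁ - u.length - 2 * M + (((block (Ψ ζ₁) (J₁ - u.length - 2 * M) (J₁ - 1) ++
        block η J₁ J₂) ++ block (Ψ ζ₂) (J₂ + 1) (J₂ + u'.length + 2 * M)).length : ℤ) - 1
      = J₂ + u'.length + 2 * M by
    simp only [List.length_append]
    rw [Nat.cast_add, Nat.cast_add, blk_len_int _ (by omega), blk_len_int _ (by omega),
      blk_len_int _ (by omega)]
    ring] at he₃
  obtain ⟨he₃l, he₃r⟩ := blk_cut_split (m := J₂ + 1) (by omega) (by omega) he₃
    (by rw [List.length_append, Nat.cast_add, blk_len_int _ (by omega),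
          blk_len_int _ (by omega)]; ring)
  rw [show J₂ + 1 - 1 = J₂ by ring] at he₃l
  obtain ⟨he₃u, he₃v⟩ := blk_cut_split (m := J₁) (by omega) (by omega) he₃l
    (by rw [blk_len_int _ (by omega)]; ring)
  -- pointwise identifications in Y
  have hp₁ : ∀ j, J₁ - u.length - 2 * M ≤ j → j ≤ J₂ → η₃ j = Ψ ζ₁ j := by
    intro j hj1 hj2
    rcases le_or_gt j (J₁ - 1) with hc | hc
    · exact blk_pt (he₃u.trans (blk_eq_of_forall fun _ _ _ => rfl).symm) hj1 hc
    · exact blk_pt (he₃v.trans hb₁.symm) (by omega) hj2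
  have hp₂ : ∀ j, J₁ ≤ j → j ≤ J₂ + u'.length + 2 * M → η₃ j = Ψ ζ₂ j := by
    intro j hj1 hj2
    rcases le_or_gt j J₂ with hc | hc
    · exact blk_pt (he₃v.trans hb₂.symm) hj1 hc
    · exact blk_pt (he₃r.trans (blk_eq_of_forall fun _ _ _ => rfl).symm) (by omega) hj2
  -- push forward to Z
  have hζ₃ : Φ η₃ ∈ Z := hΦ η₃ hη₃
  have hq₁ : ∀ i, J₁ - u.length - M ≤ i → i ≤ J₂ - M → Φ η₃ i = ζ₁ i := by
    intro i hi1 hi2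
    have := hΦb η₃ hη₃ (Ψ ζ₁) hη₁ i (fun j hj1 hj2 => hp₁ j (by omega) (by omega))
    rwa [hΦΨ ζ₁ hζ₁] at this
  have hq₂ : ∀ i, J₁ + M ≤ i → i ≤ J₂ + u'.length + M → Φ η₃ i = ζ₂ i := by
    intro i hi1 hi2
    have := hΦb η₃ hη₃ (Ψ ζ₂) hη₂ i (fun j hj1 hj2 => hp₂ j (by omega) (by omega))
    rwa [hΦΨ ζ₂ hζ₂] at this
  -- assemble the final word
  have p1 : block (Φ η₃) (J₁ - M - u.length) (J₁ - M - 1) = u := by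
    rw [blk_eq_of_forall (y := ζ₁) (fun j hj1 hj2 => hq₁ j (by omega) (by omega))]
    rw [show J₁ - M - u.length = J₁ - u.length - M by ring] at he₁u ⊢
    exact he₁u
  have p2 : block (Φ η₃) (J₁ - M) (J₂ + M) = block (Φ η) (J₁ - M) (J₂ + M) := by
    refine blk_eq_of_forall fun i hi1 hi2 => ?_
    rcases le_or_gt i (J₂ - M) with hc | hc
    · rw [hq₁ i (by omega) hc]; exact blk_pt he₁w hi1 hi2
    · rw [hq₂ i (by omega) (by omega)]; exact blk_pt he₂w hi1 hi2
  have p3 : block (Φ η₃) (J₂ + M + 1) (J₂ + M + u'.length) = u' := by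
    rw [blk_eq_of_forall (y := ζ₂) (fun j hj1 hj2 => hq₂ j (by omega) (by omega))]
    rw [show J₂ + M + u'.length = J₂ + u'.length + M by ring] at he₂u ⊢
    exact he₂u
  refine adm_of_blk_eq hζ₃ (a := J₁ - M - u.length) (b := J₂ + M + u'.length) ?_
  rw [blk_cut (m := J₁ - M) _ (by omega) (by omega), p1,
    blk_cut (m := J₂ + M + 1) _ (by omega) (by omega),
    show J₂ + M + 1 - 1 = J₂ + M by ring, p2, p3]
  simp [List.append_assoc]

end Stmt1Aux
namespace Stmt1Aux

theorem hb_sync_up {B : Type*} {Z : Set (ℤ → B)} (hZs : shift '' Z = Z) (R : ℕ)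
    {ζ : ℤ → B} (hζ : ζ ∈ Z) {p q : ℤ} (hpq : p ≤ q)
    (hv : IsSyncWord Z (block ζ (p - R) (q + R))) :
    IsSyncWord (higherBlock Z (-(R:ℤ)) R) (block (hbw (-(R:ℤ)) R ζ) p q) := by
  have hZ's : shift '' higherBlock Z (-(R:ℤ)) R = higherBlock Z (-(R:ℤ)) R :=
    hb_shift_inv hZs _ _
  obtain ⟨-, hsync⟩ := hv
  refine ⟨adm_blk (hbw_mem hζ _ _) _ _, ?_⟩
  intro u' w' hu' hw'
  have hvlen : ((block (hbw (-(R:ℤ)) R ζ) p q).length : ℤ) = q + 1 - p := blk_len_int _ (by omega)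
  obtain ⟨z₁, hz₁, he₁⟩ := occ hZ's hu' (p - u'.length)
  rw [show p - u'.length + ((u' ++ block (hbw (-(R:ℤ)) R ζ) p q).length : ℤ) - 1 = q by
    rw [List.length_append, Nat.cast_add, hvlen]; ring] at he₁
  obtain ⟨he₁u, he₁v⟩ := blk_cut_split (m := p) (by omega) (by omega) he₁ (by push_cast; ring)
  obtain ⟨ζ₁, hζ₁, rfl⟩ := hbw_elim _ _ hz₁
  have hptζ₁ : ∀ i, p - R ≤ i → i ≤ q + R → ζ₁ i = ζ i := by
    intro i hi1 hi2
    obtain ⟨j, hj1, hj2, hj3, hj4⟩ := cover hpq (Int.natCast_nonneg R) hi1 hi2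
    have h2 := blk_pt he₁v hj1 hj2
    simp only [hbw] at h2
    exact blk_pt h2 (by omega) (by omega)
  have hv₁ : block ζ₁ (p - R) (q + R) = block ζ (p - R) (q + R) := blk_eq_of_forall hptζ₁
  obtain ⟨z₂, hz₂, he₂⟩ := occ hZ's hw' p
  rw [show p + ((block (hbw (-(R:ℤ)) R ζ) p q ++ w').length : ℤ) - 1 = q + w'.length by
    rw [List.length_append, Nat.cast_add, hvlen]; ring] at he₂
  obtain ⟨he₂v, he₂w⟩ := blk_cut_split (m := q + 1) (by omega) (by omega) he₂ hvlen
  rw [show q + 1 - 1 = q by ring] at he₂v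
  obtain ⟨ζ₂, hζ₂, rfl⟩ := hbw_elim _ _ hz₂
  have hptζ₂ : ∀ i, p - R ≤ i → i ≤ q + R → ζ₂ i = ζ i := by
    intro i hi1 hi2
    obtain ⟨j, hj1, hj2, hj3, hj4⟩ := cover hpq (Int.natCast_nonneg R) hi1 hi2
    have h2 := blk_pt he₂v hj1 hj2
    simp only [hbw] at h2
    exact blk_pt h2 (by omega) (by omega)
  have hv₂ : block ζ₂ (p - R) (q + R) = block ζ (p - R) (q + R) := blk_eq_of_forall hptζ₂
  have huZ : Admissible Z (block ζ₁ (p - u'.length - R) (p - R - 1) ++ block ζ (p - R) (q + R)) := by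
    refine adm_of_blk_eq hζ₁ (a := p - u'.length - R) (b := q + R) ?_
    rw [blk_cut (m := p - R) _ (by omega) (by omega), hv₁]
  have hwZ : Admissible Z (block ζ (p - R) (q + R) ++
      block ζ₂ (q + R + 1) (q + R + w'.length)) := by
    refine adm_of_blk_eq hζ₂ (a := p - R) (b := q + R + w'.length) ?_
    rw [blk_cut (m := q + R + 1) _ (by omega) (by omega),
      show q + R + 1 - 1 = q + R by ring, hv₂]
  have hglue := hsync _ _ huZ hwZ
  obtain ⟨ζ₃, hζ₃, he₃⟩ := occ hZs hglue (p - u'.length - R)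
  rw [show p - u'.length - R + (((block ζ₁ (p - u'.length - R) (p - R - 1) ++
        block ζ (p - R) (q + R)) ++ block ζ₂ (q + R + 1) (q + R + w'.length)).length : ℤ) - 1
      = q + R + w'.length by
    simp only [List.length_append]
    rw [Nat.cast_add, Nat.cast_add, blk_len_int _ (by omega), blk_len_int _ (by omega),
      blk_len_int _ (by omega)]
    ring] at he₃
  obtain ⟨he₃l, he₃r⟩ := blk_cut_split (m := q + R + 1) (by omega) (by omega) he₃
    (by rw [List.length_append, Nat.cast_add, blk_len_int _ (by omega),
          blk_len_int _ (by omega)]; ring)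
  rw [show q + R + 1 - 1 = q + R by ring] at he₃l
  obtain ⟨he₃u, he₃v⟩ := blk_cut_split (m := p - R) (by omega) (by omega) he₃l
    (by rw [blk_len_int _ (by omega)]; ring)
  have hc₁ : ∀ i, p - u'.length - R ≤ i → i ≤ q + R → ζ₃ i = ζ₁ i := by
    intro i h1 h2
    rcases le_or_gt i (p - R - 1) with hc | hc
    · exact blk_pt he₃u h1 hc
    · exact blk_pt (he₃v.trans hv₁.symm) (by omega) h2
  have hc₂ : ∀ i, p - R ≤ i → i ≤ q + R + w'.length → ζ₃ i = ζ₂ i := by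
    intro i h1 h2
    rcases le_or_gt i (q + R) with hc | hc
    · exact blk_pt (he₃v.trans hv₂.symm) h1 hc
    · exact blk_pt he₃r (by omega) h2
  refine adm_of_blk_eq (X := higherBlock Z (-(R:ℤ)) R) (hbw_mem hζ₃ _ _)
      (a := p - u'.length) (b := q + w'.length) ?_
  have q1 : block (hbw (-(R:ℤ)) R ζ₃) (p - u'.length) (p - 1) = u' := by
    have e : block (hbw (-(R:ℤ)) R ζ₃) (p - u'.length) (p - 1)
        = block (hbw (-(R:ℤ)) R ζ₁) (p - u'.length) (p - 1) :=
      blk_eq_of_forall fun j hj1 hj2 =>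
        hbw_congr_at fun i hi1 hi2 => hc₁ i (by omega) (by omega)
    rw [e, he₁u]
  have q2 : block (hbw (-(R:ℤ)) R ζ₃) p q = block (hbw (-(R:ℤ)) R ζ) p q :=
    blk_eq_of_forall fun j hj1 hj2 => hbw_congr_at fun i hi1 hi2 => by
      rw [hc₂ i (by omega) (by omega)]; exact hptζ₂ i (by omega) (by omega)
  have q3 : block (hbw (-(R:ℤ)) R ζ₃) (q + 1) (q + w'.length) = w' := by
    have e : block (hbw (-(R:ℤ)) R ζ₃) (q + 1) (q + w'.length)
        = block (hbw (-(R:ℤ)) R ζ₂) (q + 1) (q + w'.length) :=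
      blk_eq_of_forall fun j hj1 hj2 =>
        hbw_congr_at fun i hi1 hi2 => hc₂ i (by omega) (by omega)
    rw [e, he₂w]
  rw [blk_cut (m := p) _ (by omega) (by omega), q1,
    blk_cut (m := q + 1) _ (by omega) (by omega), show q + 1 - 1 = q by ring, q2, q3]
  simp [List.append_assoc]

theorem hb_sync_down {B : Type*} {Z : Set (ℤ → B)} (hZs : shift '' Z = Z) (R : ℕ)
    {ζ : ℤ → B} (hζ : ζ ∈ Z) {I₁ I₂ : ℤ} (hI : I₁ ≤ I₂)
    (hv : IsSyncWord (higherBlock Z (-(R:ℤ)) R) (block (hbw (-(R:ℤ)) R ζ) I₁ I₂)) :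
    IsSyncWord Z (block ζ (I₁ - R) (I₂ + R)) := by
  have hZ's : shift '' higherBlock Z (-(R:ℤ)) R = higherBlock Z (-(R:ℤ)) R :=
    hb_shift_inv hZs _ _
  obtain ⟨-, hsync⟩ := hv
  refine ⟨adm_blk hζ _ _, ?_⟩
  intro u w hu hw
  have hvlen : ((block ζ (I₁ - R) (I₂ + R)).length : ℤ) = I₂ + R + 1 - (I₁ - R) :=
    blk_len_int _ (by omega)
  obtain ⟨ζ₁, hζ₁, he₁⟩ := occ hZs hu (I₁ - R - u.length)
  rw [show I₁ - R - u.length + ((u ++ block ζ (I₁ - R) (I₂ + R)).length : ℤ) - 1 = I₂ + R by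
    rw [List.length_append, Nat.cast_add, hvlen]; ring] at he₁
  obtain ⟨he₁u, he₁v⟩ := blk_cut_split (m := I₁ - R) (by omega) (by omega) he₁
    (by push_cast; ring)
  obtain ⟨ζ₂, hζ₂, he₂⟩ := occ hZs hw (I₁ - R)
  rw [show I₁ - R + ((block ζ (I₁ - R) (I₂ + R) ++ w).length : ℤ) - 1 = I₂ + R + w.length by
    rw [List.length_append, Nat.cast_add, hvlen]; ring] at he₂
  obtain ⟨he₂v, he₂w⟩ := blk_cut_split (m := I₂ + R + 1) (by omega) (by omega) he₂
    (by rw [hvlen])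
  rw [show I₂ + R + 1 - 1 = I₂ + R by ring] at he₂v
  have hb₁ : block (hbw (-(R:ℤ)) R ζ₁) I₁ I₂ = block (hbw (-(R:ℤ)) R ζ) I₁ I₂ :=
    blk_eq_of_forall fun j hj1 hj2 =>
      hbw_congr_at fun i hi1 hi2 => blk_pt he₁v (by omega) (by omega)
  have hb₂ : block (hbw (-(R:ℤ)) R ζ₂) I₁ I₂ = block (hbw (-(R:ℤ)) R ζ) I₁ I₂ :=
    blk_eq_of_forall fun j hj1 hj2 =>
      hbw_congr_at fun i hi1 hi2 => blk_pt he₂v (by omega) (by omega)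
  have huY : Admissible (higherBlock Z (-(R:ℤ)) R)
      (block (hbw (-(R:ℤ)) R ζ₁) (I₁ - u.length) (I₁ - 1) ++ block (hbw (-(R:ℤ)) R ζ) I₁ I₂) := by
    refine adm_of_blk_eq (hbw_mem hζ₁ _ _) (a := I₁ - u.length) (b := I₂) ?_
    rw [blk_cut (m := I₁) _ (by omega) (by omega), hb₁]
  have hwY : Admissible (higherBlock Z (-(R:ℤ)) R)
      (block (hbw (-(R:ℤ)) R ζ) I₁ I₂ ++ block (hbw (-(R:ℤ)) R ζ₂) (I₂ + 1) (I₂ + w.length)) := by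
    refine adm_of_blk_eq (hbw_mem hζ₂ _ _) (a := I₁) (b := I₂ + w.length) ?_
    rw [blk_cut (m := I₂ + 1) _ (by omega) (by omega), show I₂ + 1 - 1 = I₂ by ring, hb₂]
  have hglue := hsync _ _ huY hwY
  obtain ⟨z₃, hz₃, he₃⟩ := occ hZ's hglue (I₁ - u.length)
  rw [show I₁ - u.length + (((block (hbw (-(R:ℤ)) R ζ₁) (I₁ - u.length) (I₁ - 1) ++
        block (hbw (-(R:ℤ)) R ζ) I₁ I₂) ++
        block (hbw (-(R:ℤ)) R ζ₂) (I₂ + 1) (I₂ + w.length)).length : ℤ) - 1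
      = I₂ + w.length by
    simp only [List.length_append]
    rw [Nat.cast_add, Nat.cast_add, blk_len_int _ (by omega), blk_len_int _ (by omega),
      blk_len_int _ (by omega)]
    ring] at he₃
  obtain ⟨he₃l, he₃r⟩ := blk_cut_split (m := I₂ + 1) (by omega) (by omega) he₃
    (by rw [List.length_append, Nat.cast_add, blk_len_int _ (by omega),
          blk_len_int _ (by omega)]; ring)
  rw [show I₂ + 1 - 1 = I₂ by ring] at he₃l
  obtain ⟨he₃u, he₃v⟩ := blk_cut_split (m := I₁) (by omega) (by omega) he₃l
    (by rw [blk_len_int _ (by omega)]; ring)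
  obtain ⟨ζ₃, hζ₃, rfl⟩ := hbw_elim _ _ hz₃
  have hc₁ : ∀ i, I₁ - u.length - R ≤ i → i ≤ I₂ + R → ζ₃ i = ζ₁ i := by
    intro i h1 h2
    obtain ⟨j, hj1, hj2, hj3, hj4⟩ := cover (p := I₁ - u.length) (q := I₂) (R := (R:ℤ))
      (i := i) (by omega) (Int.natCast_nonneg R) (by omega) (by omega)
    have hsym : hbw (-(R:ℤ)) R ζ₃ j = hbw (-(R:ℤ)) R ζ₁ j := by
      rcases le_or_gt j (I₁ - 1) with hc | hc
      · exact blk_pt he₃u hj1 hc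
      · exact blk_pt (he₃v.trans hb₁.symm) (by omega) hj2
    simp only [hbw] at hsym
    exact blk_pt hsym (by omega) (by omega)
  have hc₂ : ∀ i, I₁ - R ≤ i → i ≤ I₂ + w.length + R → ζ₃ i = ζ₂ i := by
    intro i h1 h2
    obtain ⟨j, hj1, hj2, hj3, hj4⟩ := cover (p := I₁) (q := I₂ + w.length) (R := (R:ℤ))
      (i := i) (by omega) (Int.natCast_nonneg R) (by omega) (by omega)
    have hsym : hbw (-(R:ℤ)) R ζ₃ j = hbw (-(R:ℤ)) R ζ₂ j := by
      rcases le_or_gt j I₂ with hc | hc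
      · exact blk_pt (he₃v.trans hb₂.symm) hj1 hc
      · exact blk_pt he₃r (by omega) hj2
    simp only [hbw] at hsym
    exact blk_pt hsym (by omega) (by omega)
  refine adm_of_blk_eq hζ₃ (a := I₁ - R - u.length) (b := I₂ + R + w.length) ?_
  have q1 : block ζ₃ (I₁ - R - u.length) (I₁ - R - 1) = u := by
    have e : block ζ₃ (I₁ - R - u.length) (I₁ - R - 1) = block ζ₁ (I₁ - R - u.length) (I₁ - R - 1) :=
      blk_eq_of_forall fun i hi1 hi2 => hc₁ i (by omega) (by omega)
    rw [e]
    rw [show I₁ - R - u.length = I₁ - u.length - R by ring] at he₁u ⊢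
    exact he₁u
  have q2 : block ζ₃ (I₁ - R) (I₂ + R) = block ζ (I₁ - R) (I₂ + R) :=
    blk_eq_of_forall fun i hi1 hi2 => by
      rw [hc₁ i (by omega) (by omega)]; exact blk_pt he₁v hi1 hi2
  have q3 : block ζ₃ (I₂ + R + 1) (I₂ + R + w.length) = w := by
    have e : block ζ₃ (I₂ + R + 1) (I₂ + R + w.length)
        = block ζ₂ (I₂ + R + 1) (I₂ + R + w.length) :=
      blk_eq_of_forall fun i hi1 hi2 => hc₂ i (by omega) (by omega)
    rw [e]
    rw [show I₂ + R + w.length = I₂ + w.length + R by ring] at he₂w ⊢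
    exact he₂w
  rw [blk_cut (m := I₁ - R) _ (by omega) (by omega), q1,
    blk_cut (m := I₂ + R + 1) _ (by omega) (by omega),
    show I₂ + R + 1 - 1 = I₂ + R by ring, q2, q3]
  simp [List.append_assoc]

end Stmt1Aux
namespace Stmt1Aux

theorem trans_push {C B : Type*} {Y : Set (ℤ → C)} {Z : Set (ℤ → B)}
    (hYs : shift '' Y = Y) (hZs : shift '' Z = Z)
    {Φ : (ℤ → C) → (ℤ → B)} {Ψ : (ℤ → B) → (ℤ → C)}
    (hΦ : ∀ η ∈ Y, Φ η ∈ Z) (hΨ : ∀ ζ ∈ Z, Ψ ζ ∈ Y)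
    (hΦΨ : ∀ ζ ∈ Z, Φ (Ψ ζ) = ζ)
    (M : ℕ)
    (hΦb : ∀ η ∈ Y, ∀ η' ∈ Y, ∀ i : ℤ,
      (∀ j, i - M ≤ j → j ≤ i + M → η j = η' j) → Φ η i = Φ η' i)
    (hΦsh : ∀ η ∈ Y, ∀ m : ℤ, Φ (shiftBy m η) = shiftBy m (Φ η))
    (hYt : LangTransitive Y) : LangTransitive Z := by
  intro U V hU hV
  obtain ⟨ζ₁, hζ₁, he₁⟩ := occ hZs hU 0
  obtain ⟨ζ₂, hζ₂, he₂⟩ := occ hZs hV 0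
  rw [show (0:ℤ) + U.length - 1 = (U.length:ℤ) - 1 by ring] at he₁
  rw [show (0:ℤ) + V.length - 1 = (V.length:ℤ) - 1 by ring] at he₂
  have hη₁ : Ψ ζ₁ ∈ Y := hΨ ζ₁ hζ₁
  have hη₂ : Ψ ζ₂ ∈ Y := hΨ ζ₂ hζ₂
  obtain ⟨t, ht⟩ := hYt (block (Ψ ζ₁) (-(M:ℤ)) (U.length - 1 + M))
    (block (Ψ ζ₂) (-(M:ℤ)) (V.length - 1 + M)) (adm_blk hη₁ _ _) (adm_blk hη₂ _ _)
  obtain ⟨η₃, hη₃, he₃⟩ := occ hYs ht (-(M:ℤ))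
  set c : ℤ := U.length + M + t.length with hc
  rw [show -(M:ℤ) + ((block (Ψ ζ₁) (-(M:ℤ)) (U.length - 1 + M) ++ t ++
        block (Ψ ζ₂) (-(M:ℤ)) (V.length - 1 + M)).length : ℤ) - 1 = c + V.length + 2*M - 1 by
    simp only [List.length_append]
    rw [Nat.cast_add, Nat.cast_add, blk_len_int _ (by omega), blk_len_int _ (by omega)]
    omega] at he₃
  obtain ⟨he₃l, he₃r⟩ := blk_cut_split (m := c) (by omega) (by omega) he₃
    (by rw [List.length_append, Nat.cast_add, blk_len_int _ (by omega)]; omega)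
  obtain ⟨he₃u, -⟩ := blk_cut_split (m := (U.length:ℤ) + M) (by omega) (by omega) he₃l
    (by rw [blk_len_int _ (by omega)]; ring)
  rw [show (U.length:ℤ) + M - 1 = (U.length:ℤ) - 1 + M by ring] at he₃u
  have hp₁ : ∀ j, -(M:ℤ) ≤ j → j ≤ U.length - 1 + M → η₃ j = Ψ ζ₁ j :=
    fun j hj1 hj2 => blk_pt he₃u hj1 hj2
  have hp₂ : ∀ j, c ≤ j → j ≤ c + V.length - 1 + 2*M → η₃ j = shiftBy (-c - M) (Ψ ζ₂) j := by
    have e := blk_shift (Ψ ζ₂) (-c - M) c (c + V.length + 2*M - 1)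
    rw [show c + (-c - (M:ℤ)) = -(M:ℤ) by ring,
      show c + V.length + 2*M - 1 + (-c - (M:ℤ)) = (V.length:ℤ) - 1 + M by ring] at e
    intro j hj1 hj2
    exact blk_pt (he₃r.trans e.symm) hj1 (by omega)
  have hq₁ : ∀ i, 0 ≤ i → i ≤ (U.length:ℤ) - 1 → Φ η₃ i = ζ₁ i := by
    intro i hi1 hi2
    have := hΦb η₃ hη₃ (Ψ ζ₁) hη₁ i (fun j hj1 hj2 => hp₁ j (by omega) (by omega))
    rwa [hΦΨ ζ₁ hζ₁] at this
  have hη₂' : shiftBy (-c - M) (Ψ ζ₂) ∈ Y := shiftBy_mem hYs hη₂ _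
  have hq₂ : ∀ i, c + M ≤ i → i ≤ c + M + V.length - 1 →
      Φ η₃ i = shiftBy (-c - M) ζ₂ i := by
    intro i hi1 hi2
    have := hΦb η₃ hη₃ _ hη₂' i (fun j hj1 hj2 => hp₂ j (by omega) (by omega))
    rwa [hΦsh (Ψ ζ₂) hη₂ (-c - M), hΦΨ ζ₂ hζ₂] at this
  refine ⟨block (Φ η₃) (U.length) (c + M - 1),
    adm_of_blk_eq (hΦ η₃ hη₃) (a := 0) (b := c + M + V.length - 1) ?_⟩
  have r1 : block (Φ η₃) 0 ((U.length:ℤ) - 1) = U := by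
    have e : block (Φ η₃) 0 ((U.length:ℤ) - 1) = block ζ₁ 0 ((U.length:ℤ) - 1) :=
      blk_eq_of_forall fun i hi1 hi2 => hq₁ i hi1 hi2
    rw [e, he₁]
  have r3 : block (Φ η₃) (c + M) (c + M + V.length - 1) = V := by
    have e : block (Φ η₃) (c + M) (c + M + V.length - 1)
        = block (shiftBy (-c - M) ζ₂) (c + M) (c + M + V.length - 1) :=
      blk_eq_of_forall fun i hi1 hi2 => hq₂ i hi1 hi2
    rw [e, blk_shift, show c + (M:ℤ) + (-c - M) = 0 by ring,
      show c + (M:ℤ) + V.length - 1 + (-c - M) = (V.length:ℤ) - 1 by ring, he₂]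
  rw [blk_cut (m := (U.length:ℤ)) _ (by omega) (by omega), r1,
    blk_cut (m := c + M) _ (by omega) (by omega), r3]
  simp [List.append_assoc]

end Stmt1Aux
namespace Stmt1Aux

open Classical in
noncomputable def hbInv {B : Type*} (Z : Set (ℤ → B)) (a b : ℤ) (d : ℤ → B)
    (z' : ℤ → List B) : ℤ → B :=
  if h : z' ∈ higherBlock Z a b then Classical.choose (hbw_elim a b h) else d

theorem hbInv_mem {B : Type*} {Z : Set (ℤ → B)} {a b : ℤ} (d : ℤ → B) {z' : ℤ → List B}
    (h : z' ∈ higherBlock Z a b) : hbInv Z a b d z' ∈ Z := by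
  unfold hbInv
  rw [dif_pos (h := Classical.propDecidable _) h]
  exact (Classical.choose_spec (hbw_elim a b h)).1

theorem hbInv_spec {B : Type*} {Z : Set (ℤ → B)} {a b : ℤ} (d : ℤ → B) {z' : ℤ → List B}
    (h : z' ∈ higherBlock Z a b) : hbw a b (hbInv Z a b d z') = z' := by
  unfold hbInv
  rw [dif_pos (h := Classical.propDecidable _) h]
  exact ((Classical.choose_spec (hbw_elim a b h)).2).symm

theorem transfer {C B : Type*} {Y : Set (ℤ → C)} {Z : Set (ℤ → B)}
    (hYs : shift '' Y = Y) (hZs : shift '' Z = Z)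
    {Φ : (ℤ → C) → (ℤ → B)} {Ψ : (ℤ → B) → (ℤ → C)}
    (hΦ : ∀ η ∈ Y, Φ η ∈ Z) (hΨ : ∀ ζ ∈ Z, Ψ ζ ∈ Y)
    (hΨΦ : ∀ η ∈ Y, Ψ (Φ η) = η) (hΦΨ : ∀ ζ ∈ Z, Φ (Ψ ζ) = ζ)
    (M : ℕ)
    (hΦb : ∀ η ∈ Y, ∀ η' ∈ Y, ∀ i : ℤ,
      (∀ j, i - M ≤ j → j ≤ i + M → η j = η' j) → Φ η i = Φ η' i)
    (hΨb : ∀ ζ ∈ Z, ∀ ζ' ∈ Z, ∀ i : ℤ,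
      (∀ j, i - M ≤ j → j ≤ i + M → ζ j = ζ' j) → Ψ ζ i = Ψ ζ' i)
    (hΦsh : ∀ η ∈ Y, ∀ m : ℤ, Φ (shiftBy m η) = shiftBy m (Φ η))
    (hY : StronglySync Y) : SufficientlySync Z := by
  obtain ⟨⟨hYt, v, hv⟩, Q, hQ⟩ := hY
  set R : ℕ := 2 * M with hR
  have hZ's : shift '' higherBlock Z (-(R:ℤ)) R = higherBlock Z (-(R:ℤ)) R :=
    hb_shift_inv hZs _ _
  -- a base point of Y
  obtain ⟨η₀, hη₀, he₀⟩ := occ hYs hv.1 0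
  rw [show (0:ℤ) + v.length - 1 = (v.length:ℤ) - 1 by ring] at he₀
  -- language transitivity of Z
  have hZt : LangTransitive Z := trans_push hYs hZs hΦ hΨ hΦΨ M hΦb hΦsh hYt
  -- language transitivity of Z'
  have hZ't : LangTransitive (higherBlock Z (-(R:ℤ)) R) := by
    refine trans_push (Y := Z) hZs hZ's (Φ := hbw (-(R:ℤ)) R)
      (Ψ := hbInv Z (-(R:ℤ)) R (Φ η₀))
      (fun ζ hζ => hbw_mem hζ _ _) (fun z' hz' => hbInv_mem _ hz')
      (fun z' hz' => hbInv_spec _ hz') R ?_ ?_ hZt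
    · intro ζ hζ ζ' hζ' i hagree
      exact hbw_congr_at fun j hj1 hj2 => hagree j (by omega) (by omega)
    · intro ζ hζ m
      exact hbw_shiftBy _ _ _ _
  -- a synchronizing word for Z'
  have hvη₀ : IsSyncWord Y (block η₀ 0 ((v.length:ℤ) - 1)) := by rw [he₀]; exact hv
  have s1 : IsSyncWord Y (block η₀ (-(M:ℤ)) ((v.length:ℤ) - 1 + M)) :=
    sync_extend hη₀ (by omega) (by omega) (by omega) hvη₀
  have s2 : IsSyncWord Z (block (Φ η₀) (-(M:ℤ) - M) ((v.length:ℤ) - 1 + M + M)) :=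
    sync_push hYs hZs hΦ hΨ hΨΦ hΦΨ M hΦb hΨb hη₀ (by omega) s1
  have s3 : IsSyncWord Z (block (Φ η₀) (0 - (R:ℤ)) ((v.length:ℤ) + R)) :=
    sync_extend (hΦ η₀ hη₀) (by omega) (by omega) (by omega) s2
  have s4 : IsSyncWord (higherBlock Z (-(R:ℤ)) R)
      (block (hbw (-(R:ℤ)) R (Φ η₀)) 0 (v.length)) :=
    hb_sync_up hZs R (hΦ η₀ hη₀) (by omega) s3
  -- assemble
  refine ⟨-(R:ℤ), (R:ℤ), by omega, ⟨hZ't, _, s4⟩, R + M + Q, ?_⟩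
  intro z' hz' I₁ I₂ hI hsyncw
  obtain ⟨ζ, hζ, rfl⟩ := hbw_elim _ _ hz'
  have h1 : IsSyncWord Z (block ζ (I₁ - R) (I₂ + R)) := hb_sync_down hZs R hζ hI hsyncw
  have h2 : IsSyncWord Y (block (Ψ ζ) (I₁ - R - M) (I₂ + R + M)) :=
    sync_push hZs hYs hΨ hΦ hΦΨ hΨΦ M hΨb hΦb hζ (by omega) h1
  obtain ⟨i, hi1, hi2, hi3⟩ := hQ (Ψ ζ) (hΨ ζ hζ) (I₁ - R - M) (I₂ + R + M) (by omega) h2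
  rw [← blk_singleton] at hi3
  have h3 : IsSyncWord Y (block (Ψ ζ) (i - M) (i + M)) :=
    sync_extend (hΨ ζ hζ) (by omega) (by omega) (by omega) hi3
  have h4 : IsSyncWord Z (block (Φ (Ψ ζ)) (i - M - M) (i + M + M)) :=
    sync_push hYs hZs hΦ hΨ hΨΦ hΦΨ M hΦb hΨb (hΨ ζ hζ) (by omega) h3
  rw [hΦΨ ζ hζ] at h4
  have h5 : IsSyncWord Z (block ζ (i - (R:ℤ)) (i + R)) :=
    sync_extend hζ (by omega) (by omega) (by omega) h4
  have h6 : IsSyncWord (higherBlock Z (-(R:ℤ)) R) (block (hbw (-(R:ℤ)) R ζ) i i) :=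
    hb_sync_up hZs R hζ le_rfl h5
  rw [blk_singleton] at h6
  exact ⟨i, by push_cast; omega, by push_cast; omega, h6⟩

end Stmt1Aux
namespace Stmt1Aux

theorem blk_cons {A : Type*} (x : ℤ → A) {a b : ℤ} (h : a ≤ b) :
    block x a b = x a :: block x (a + 1) b := by
  have e := blk_cut x (a := a) (m := a + 1) (c := b) (by omega) (by omega)
  rw [show a + 1 - 1 = a by ring, blk_singleton] at e
  exact e

theorem F_shiftBy {A B : Type*} {X : Set (ℤ → A)} {F : (ℤ → A) → (ℤ → B)}
    (hXs : shift '' X = X) (hFsh : ∀ x ∈ X, F (shift x) = shift (F x)) :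
    ∀ x ∈ X, ∀ m : ℤ, F (shiftBy m x) = shiftBy m (F x) := by
  intro x hx m
  induction m using Int.induction_on with
  | zero => rw [shiftBy_zero, shiftBy_zero]
  | succ k ih =>
      have h1 : shiftBy ((k:ℤ)+1) x = shift (shiftBy k x) := by
        funext i; exact congrArg x (by ring)
      rw [h1, hFsh _ (shiftBy_mem hXs hx k), ih, shift_eq_shiftBy, shiftBy_add,
        add_comm (1:ℤ)]
  | pred k ih =>
      have hmem : shiftBy (-(k:ℤ)-1) x ∈ X := shiftBy_mem hXs hx _
      have h1 : shift (shiftBy (-(k:ℤ)-1) x) = shiftBy (-(k:ℤ)) x := by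
        funext i; exact congrArg x (by ring)
      have h2 := hFsh _ hmem
      rw [h1, ih] at h2
      have h3 : shiftBy (-1) (shiftBy (-(k:ℤ)) (F x))
          = shiftBy (-1) (shift (F (shiftBy (-(k:ℤ)-1) x))) := congrArg _ h2
      rw [shiftBy_add, shift_eq_shiftBy, shiftBy_add,
        show (-1:ℤ) + 1 = 0 by norm_num, shiftBy_zero,
        show (-1:ℤ) + -(k:ℤ) = -(k:ℤ) - 1 by ring] at h3
      exact h3.symm

theorem chl0 {A B : Type*} [TopologicalSpace A] [DiscreteTopology A]
    [TopologicalSpace B] [DiscreteTopology B]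
    {X : Set (ℤ → A)} (hXc : IsCompact X) {F : (ℤ → A) → (ℤ → B)}
    (hFc : ContinuousOn F X) :
    ∃ N : ℕ, ∀ x ∈ X, ∀ x' ∈ X, (∀ j : ℤ, -(N:ℤ) ≤ j → j ≤ N → x j = x' j) →
      F x 0 = F x' 0 := by
  classical
  have hev : ContinuousOn (fun y => F y 0) X := (continuous_apply 0).comp_continuousOn hFc
  have key : ∀ x : X, ∃ I : Finset ℤ, ∀ y ∈ X, (∀ i ∈ I, y i = (x : ℤ → A) i) →
      F y 0 = F (x : ℤ → A) 0 := by
    rintro ⟨x, hx⟩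
    have h1 : (fun y => F y 0) ⁻¹' {F x 0} ∈ nhdsWithin x X :=
      (hev x hx) ((isOpen_discrete _).mem_nhds (Set.mem_singleton _))
    rw [mem_nhdsWithin] at h1
    obtain ⟨U, hUo, hxU, hU⟩ := h1
    obtain ⟨I, u, hu, hsub⟩ := (isOpen_pi_iff.mp hUo) x hxU
    refine ⟨I, fun y hy hyI => ?_⟩
    have : y ∈ U ∩ X := ⟨hsub (fun i hi => by rw [hyI i hi]; exact (hu i hi).2), hy⟩
    exact hU this
  choose I hI using key
  have hCo : ∀ x : X, IsOpen ((↑(I x) : Set ℤ).pi fun i => {(x : ℤ → A) i}) := fun x =>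
    isOpen_set_pi (Finset.finite_toSet _) fun a _ => isOpen_discrete _
  have hcov : X ⊆ ⋃ x : X, (↑(I x) : Set ℤ).pi fun i => {(x : ℤ → A) i} := fun y hy =>
    Set.mem_iUnion.mpr ⟨⟨y, hy⟩, Set.mem_pi.mpr fun i _ => Set.mem_singleton _⟩
  obtain ⟨t, ht⟩ := hXc.elim_finite_subcover _ hCo hcov
  refine ⟨t.sup fun x => (I x).sup Int.natAbs, ?_⟩
  intro x hx x' hx' hagree
  obtain ⟨x₀, hx₀t, hxC⟩ : ∃ x₀ ∈ t, x ∈ (↑(I x₀) : Set ℤ).pi fun i => {(x₀ : ℤ → A) i} := by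
    have := ht hx
    simpa using this
  have h1 : F x 0 = F (x₀ : ℤ → A) 0 :=
    hI x₀ x hx fun i hi => Set.mem_pi.mp hxC i hi
  have h2 : F x' 0 = F (x₀ : ℤ → A) 0 := by
    refine hI x₀ x' hx' fun i hi => ?_
    have hb : i.natAbs ≤ t.sup fun x => (I x).sup Int.natAbs :=
      le_trans (Finset.le_sup hi) (Finset.le_sup (f := fun x => (I x).sup Int.natAbs) hx₀t)
    rw [← hagree i (by omega) (by omega)]
    exact Set.mem_pi.mp hxC i hi
  rw [h1, h2]

theorem chl {A B : Type*} [TopologicalSpace A] [DiscreteTopology A]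
    [TopologicalSpace B] [DiscreteTopology B]
    {X : Set (ℤ → A)} (hXc : IsCompact X) (hXs : shift '' X = X)
    {F : (ℤ → A) → (ℤ → B)} (hFc : ContinuousOn F X)
    (hFsh : ∀ x ∈ X, F (shift x) = shift (F x)) :
    ∃ N : ℕ, ∀ x ∈ X, ∀ x' ∈ X, ∀ i : ℤ,
      (∀ j, i - N ≤ j → j ≤ i + N → x j = x' j) → F x i = F x' i := by
  obtain ⟨N, hN⟩ := chl0 hXc hFc
  refine ⟨N, fun x hx x' hx' i hagree => ?_⟩
  have hx1 : shiftBy i x ∈ X := shiftBy_mem hXs hx i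
  have hx2 : shiftBy i x' ∈ X := shiftBy_mem hXs hx' i
  have h0 := hN _ hx1 _ hx2 (fun j hj1 hj2 => hagree (j + i) (by omega) (by omega))
  rw [F_shiftBy hXs hFsh x hx i, F_shiftBy hXs hFsh x' hx' i] at h0
  have e1 : shiftBy i (F x) 0 = F x i := congrArg (F x) (by ring)
  have e2 : shiftBy i (F x') 0 = F x' i := congrArg (F x') (by ring)
  rw [e1, e2] at h0
  exact h0

end Stmt1Aux

open Stmt1Aux in
/-- Proposition 2.3: sufficient synchronization is an invariant of topological conjugacy. -/
theorem stmt1 {A B : Type*} [Fintype A] [Fintype B]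
    [TopologicalSpace A] [DiscreteTopology A] [TopologicalSpace B] [DiscreteTopology B]
    (X : Set (ℤ → A)) (Xt : Set (ℤ → B)) (hX : IsSubshift X) (hXt : IsSubshift Xt)
    (F : (ℤ → A) → (ℤ → B)) (G : (ℤ → B) → (ℤ → A))
    (hF : ∀ x ∈ X, F x ∈ Xt) (hG : ∀ y ∈ Xt, G y ∈ X)
    (hGF : ∀ x ∈ X, G (F x) = x) (hFG : ∀ y ∈ Xt, F (G y) = y)
    (hshift : ∀ x ∈ X, F (shift x) = shift (F x))
    (hFc : ContinuousOn F X) (hGc : ContinuousOn G Xt)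
    (hs : SufficientlySync X) :
    SufficientlySync Xt := by
  classical
  obtain ⟨a₀, b₀, hab, hYstr⟩ := hs
  haveI : Inhabited A := ⟨hX.1.some 0⟩
  have hXs := hX.2.2
  have hZs := hXt.2.2
  have hXcomp : IsCompact X := hX.2.1.isCompact
  have hXtcomp : IsCompact Xt := hXt.2.1.isCompact
  obtain ⟨N₁, hN₁⟩ := chl hXcomp hXs hFc hshift
  have hGshift : ∀ y ∈ Xt, G (shift y) = shift (G y) := by
    intro y hy
    have h1 : shift (G y) ∈ X := by rw [← hXs]; exact ⟨G y, hG y hy, rfl⟩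
    have h2 : F (shift (G y)) = shift y := by rw [hshift _ (hG y hy), hFG y hy]
    calc G (shift y) = G (F (shift (G y))) := by rw [h2]
      _ = shift (G y) := hGF _ h1
  obtain ⟨N₂, hN₂⟩ := chl hXtcomp hZs hGc hGshift
  set N : ℕ := max N₁ N₂ with hN
  have hFb : ∀ x ∈ X, ∀ x' ∈ X, ∀ i : ℤ,
      (∀ j, i - N ≤ j → j ≤ i + N → x j = x' j) → F x i = F x' i :=
    fun x hx x' hx' i h => hN₁ x hx x' hx' i (fun j h1 h2 => h j (by omega) (by omega))
  have hGb : ∀ y ∈ Xt, ∀ y' ∈ Xt, ∀ i : ℤ,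
      (∀ j, i - N ≤ j → j ≤ i + N → y j = y' j) → G y i = G y' i :=
    fun y hy y' hy' i h => hN₂ y hy y' hy' i (fun j h1 h2 => h j (by omega) (by omega))
  set M : ℕ := N + a₀.natAbs + b₀.natAbs with hM
  set π : (ℤ → List A) → (ℤ → A) := fun z i => (z (i - a₀)).headI with hπdef
  have hπhb : ∀ x : ℤ → A, π (hbw a₀ b₀ x) = x := by
    intro x; funext i
    show (block x (i - a₀ + a₀) (i - a₀ + b₀)).headI = x i
    rw [show i - a₀ + a₀ = i by ring, blk_cons x (by omega)]
    rfl
  have hYs : shift '' higherBlock X a₀ b₀ = higherBlock X a₀ b₀ := hb_shift_inv hXs _ _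
  refine transfer (Y := higherBlock X a₀ b₀) (Z := Xt) hYs hZs
    (Φ := fun z => F (π z)) (Ψ := fun y => hbw a₀ b₀ (G y))
    ?_ ?_ ?_ ?_ M ?_ ?_ ?_ hYstr
  · intro z hz
    obtain ⟨x, hx, rfl⟩ := hbw_elim _ _ hz
    show F (π (hbw a₀ b₀ x)) ∈ Xt
    rw [hπhb]; exact hF x hx
  · intro y hy
    exact hbw_mem (hG y hy) _ _
  · intro z hz
    obtain ⟨x, hx, rfl⟩ := hbw_elim _ _ hz
    show hbw a₀ b₀ (G (F (π (hbw a₀ b₀ x)))) = hbw a₀ b₀ x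
    rw [hπhb, hGF x hx]
  · intro y hy
    show F (π (hbw a₀ b₀ (G y))) = y
    rw [hπhb, hFG y hy]
  · intro z hz z' hz' i hagree
    obtain ⟨x, hx, rfl⟩ := hbw_elim _ _ hz
    obtain ⟨x', hx', rfl⟩ := hbw_elim _ _ hz'
    show F (π (hbw a₀ b₀ x)) i = F (π (hbw a₀ b₀ x')) i
    rw [hπhb, hπhb]
    refine hFb x hx x' hx' i (fun j hj1 hj2 => ?_)
    have e : π (hbw a₀ b₀ x) j = π (hbw a₀ b₀ x') j :=
      congrArg List.headI (hagree (j - a₀) (by omega) (by omega))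
    rwa [hπhb, hπhb] at e
  · intro y hy y' hy' i hagree
    refine hbw_congr_at (fun j hj1 hj2 => ?_)
    exact hGb y hy y' hy' j (fun j' h1 h2 => hagree j' (by omega) (by omega))
  · intro z hz m
    obtain ⟨x, hx, rfl⟩ := hbw_elim _ _ hz
    show F (π (shiftBy m (hbw a₀ b₀ x))) = shiftBy m (F (π (hbw a₀ b₀ x)))
    rw [← hbw_shiftBy, hπhb, hπhb]
    exact F_shiftBy hXs hshift x hx m
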